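/- Work in A = ℂ[y₁,…,yₙ,x₁,…,x_p] with polynomials f₂,…,f_s ∈ A containing y_i² − y_i for every i. Let b₁,…,b_k ∈ B be distinct and let a₁,…,a_k be nonnegative real numbers. If ∑_{i=1}^k a_i·y_{b_i} lies in the ideal ⟨f₂,…,f_s⟩, then a₁ = ⋯ = a_k = 0. The same conclusion holds when all a_i are nonpositive real numbers. -/
import Mathlib


open MvPolynomial

/-- The `y`-coordinate indicator condition: the vector `χ_d ∈ {0,1}ⁿ` (with
support `d`) arises as the `y`-coordinates of a common zero of the `f j`. -/
def InB (n p s : ℕ) (f : Fin s → MvPolynomial (Fin n ⊕ Fin p) ℂ)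
    (d : Finset (Fin n)) : Prop :=
  ∃ z : (Fin n ⊕ Fin p) → ℂ, (∀ j : Fin s, eval z (f j) = 0) ∧
    ∀ i : Fin n, z (Sum.inl i) = if i ∈ d then 1 else 0

lemma stmt5_aux (n p s k : ℕ) (f : Fin s → MvPolynomial (Fin n ⊕ Fin p) ℂ)
    (b : Fin k → Finset (Fin n))
    (hbB : ∀ i : Fin k, InB n p s f (b i))
    (a : Fin k → ℝ) (ha : ∀ i, 0 ≤ a i)
    (hmem : (∑ i : Fin k, C (a i : ℂ) *
        ∏ j ∈ b i, X (Sum.inl j) : MvPolynomial (Fin n ⊕ Fin p) ℂ) ∈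
      Ideal.span (Set.range f)) :
    ∀ i : Fin k, a i = 0 := by
  intro i
  obtain ⟨z, hz, hzy⟩ := hbB i
  have heval : eval z (∑ m : Fin k, C (a m : ℂ) * ∏ j ∈ b m, X (Sum.inl j)) = 0 := by
    refine Submodule.span_induction ?_ ?_ ?_ ?_ hmem
    · rintro q ⟨j, rfl⟩; exact hz j
    · simp
    · intro q r _ _ hq hr; simp [hq, hr]
    · intro q r _ hr; simp [smul_eq_mul, hr]
  have hterm : ∀ m : Fin k,
      eval z (C (a m : ℂ) * ∏ j ∈ b m, X (Sum.inl j))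
        = ((if b m ⊆ b i then a m else 0 : ℝ) : ℂ) := by
    intro m
    have hp : (∏ x ∈ b m, (if x ∈ b i then (1:ℂ) else 0))
        = if b m ⊆ b i then 1 else 0 := by
      by_cases h : b m ⊆ b i
      · rw [if_pos h, Finset.prod_congr rfl (fun j hj => if_pos (h hj))]
        simp
      · obtain ⟨j, hjm, hji⟩ := Finset.not_subset.mp h
        rw [if_neg h,
          Finset.prod_eq_zero hjm (show (if j ∈ b i then (1:ℂ) else 0) = 0 from if_neg hji)]
    simp only [eval_mul, eval_C, eval_prod, eval_X, hzy, hp]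
    by_cases h : b m ⊆ b i <;> simp [h]
  rw [map_sum, Finset.sum_congr rfl (fun m _ => hterm m), ← Complex.ofReal_sum] at heval
  have hsum : (∑ m : Fin k, if b m ⊆ b i then a m else 0) = 0 :=
    Complex.ofReal_eq_zero.mp heval
  have hzero := (Finset.sum_eq_zero_iff_of_nonneg
    (fun m _ => by split <;> [exact ha m; exact le_refl 0])).mp hsum i (Finset.mem_univ i)
  simpa [Finset.Subset.refl] using hzero

/-- If `f₂,…,f_s` contain all the `y_i² − y_i`,
`b₁,…,b_k ∈ B` are distinct and `a₁,…,a_k` are all nonnegative (or all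
nonpositive) reals with `∑ aᵢ y_{bᵢ} ∈ ⟨f₂,…,f_s⟩`, then all `aᵢ = 0`. -/
theorem stmt5 (n p s k : ℕ) (f : Fin s → MvPolynomial (Fin n ⊕ Fin p) ℂ)
    (hind : ∀ i : Fin n, ∃ j : Fin s,
      f j = (X (Sum.inl i)) ^ 2 - X (Sum.inl i))
    (b : Fin k → Finset (Fin n)) (hb : Function.Injective b)
    (hbB : ∀ i : Fin k, InB n p s f (b i))
    (a : Fin k → ℝ) (ha : (∀ i, 0 ≤ a i) ∨ (∀ i, a i ≤ 0))
    (hmem : (∑ i : Fin k, C (a i : ℂ) *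
        ∏ j ∈ b i, X (Sum.inl j) : MvPolynomial (Fin n ⊕ Fin p) ℂ) ∈
      Ideal.span (Set.range f)) :
    ∀ i : Fin k, a i = 0 := by
  rcases ha with ha | ha
  · exact stmt5_aux n p s k f b hbB a ha hmem
  · intro i
    have hmem' : (∑ i : Fin k, C ((fun i => -a i) i : ℂ) *
        ∏ j ∈ b i, X (Sum.inl j) : MvPolynomial (Fin n ⊕ Fin p) ℂ) ∈
        Ideal.span (Set.range f) := by
      have : (∑ i : Fin k, C ((-a i : ℝ) : ℂ) *
          ∏ j ∈ b i, X (Sum.inl j) : MvPolynomial (Fin n ⊕ Fin p) ℂ)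
          = -(∑ i : Fin k, C ((a i : ℝ) : ℂ) * ∏ j ∈ b i, X (Sum.inl j)) := by
        push_cast
        simp [neg_mul, Finset.sum_neg_distrib]
      simpa [this] using neg_mem hmem
    have := stmt5_aux n p s k f b hbB (fun i => -a i)
      (fun i => neg_nonneg.mpr (ha i)) hmem' i
    linarith
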